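/- arXiv:2110.05323 — 4 statements merged into one kernel-verified Lean document; each statement's English description precedes it below -/
import Mathlib

section
/- Let n : ℕ, let f : EuclideanSpace ℝ (Fin n) → ℝ be differentiable with L-Lipschitz gradient (L ≥ 0), let S be a finite set of coordinates, and let (Ω, μ) be a probability space. Let g : Ω → EuclideanSpace ℝ (Fin n) with ω ↦ (g ω)∣S integrable, ω ↦ ‖(g ω)∣S‖^2 integrable, and ω ↦ f (x - γ • (g ω)∣S) integrable. Let d := ∫ (g ω)∣S ∂μ and assume ∫ ‖(g ω)∣S - d‖^2 ∂μ ≤ σ^2. Then for every γ : ℝ, ∫ f (x - γ • (g ω)∣S) ∂μ ≤ f x - γ * ⟪(gradient f x)∣S, d⟫ + (γ^2 * L / 2) * (‖d‖^2 + σ^2). -/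
open MeasureTheory

/-- The masked vector `x∣S`: keeps coordinates in `S`, zeroes out the rest. -/
def mask {n : ℕ} (S : Finset (Fin n)) (x : EuclideanSpace ℝ (Fin n)) :
    EuclideanSpace ℝ (Fin n) :=
  WithLp.toLp 2 (fun i => if i ∈ S then x i else 0)

lemma descent_lemma {n : ℕ} (f : EuclideanSpace ℝ (Fin n) → ℝ) (L : ℝ) (hL : 0 ≤ L)
    (hdiff : Differentiable ℝ f)
    (hlip : ∀ x y, ‖gradient f x - gradient f y‖ ≤ L * ‖x - y‖)
    (x v : EuclideanSpace ℝ (Fin n)) :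
    f (x + v) ≤ f x + (inner ℝ (gradient f x) v : ℝ) + L / 2 * ‖v‖ ^ 2 := by
  have hgradcont : Continuous (fun z => gradient f z) := by
    apply (LipschitzWith.of_dist_le_mul (K := L.toNNReal) ?_).continuous
    intro a b
    simpa [dist_eq_norm, Real.coe_toNNReal L hL] using hlip a b
  have hinner : ∀ z w : EuclideanSpace ℝ (Fin n),
      (fderiv ℝ f z) w = (inner ℝ (gradient f z) w : ℝ) := by
    intro z w
    rw [gradient]
    simp [InnerProductSpace.toDual_symm_apply]
  have hφ : ∀ t : ℝ, HasDerivAt (fun t : ℝ => f (x + t • v))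
      (inner ℝ (gradient f (x + t • v)) v : ℝ) t := by
    intro t
    have h1 : HasDerivAt (fun t : ℝ => x + t • v) v t := by
      simpa using ((hasDerivAt_id t).smul_const v).const_add x
    have h2 := (hdiff (x + t • v)).hasFDerivAt.comp_hasDerivAt t h1
    rw [← hinner]; exact h2
  have hcont : Continuous (fun t : ℝ => (inner ℝ (gradient f (x + t • v)) v : ℝ)) := by
    exact (Continuous.inner (hgradcont.comp (by continuity)) continuous_const)
  have hint : ∀ a b : ℝ, IntervalIntegrable
      (fun t : ℝ => (inner ℝ (gradient f (x + t • v)) v : ℝ)) MeasureTheory.volume a b :=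
    fun a b => hcont.intervalIntegrable a b
  have heq : f (x + v) - f x
      = ∫ t in (0:ℝ)..1, (inner ℝ (gradient f (x + t • v)) v : ℝ) := by
    have := intervalIntegral.integral_eq_sub_of_hasDerivAt
      (f := fun t : ℝ => f (x + t • v)) (a := 0) (b := 1)
      (fun t _ => hφ t) (hint 0 1)
    simp only [one_smul, zero_smul, add_zero] at this
    rw [this]
  have hbound : ∫ t in (0:ℝ)..1, (inner ℝ (gradient f (x + t • v)) v : ℝ)
      ≤ (inner ℝ (gradient f x) v : ℝ) + L / 2 * ‖v‖ ^ 2 := by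
    have h1 : ∫ t in (0:ℝ)..1, (inner ℝ (gradient f (x + t • v)) v : ℝ)
        ≤ ∫ t in (0:ℝ)..1, ((inner ℝ (gradient f x) v : ℝ) + L * t * ‖v‖ ^ 2) := by
      apply intervalIntegral.integral_mono_on (by norm_num) (hint 0 1)
      · exact (Continuous.intervalIntegrable
          (continuous_const.add (((continuous_const.mul continuous_id).mul
            continuous_const))) 0 1)
      · intro t ht
        have h2 : (inner ℝ (gradient f (x + t • v)) v : ℝ)
            - (inner ℝ (gradient f x) v : ℝ)
            = (inner ℝ (gradient f (x + t • v) - gradient f x) v : ℝ) := by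
          rw [inner_sub_left]
        have h3 : (inner ℝ (gradient f (x + t • v) - gradient f x) v : ℝ)
            ≤ ‖gradient f (x + t • v) - gradient f x‖ * ‖v‖ :=
          real_inner_le_norm _ _
        have h4 : ‖gradient f (x + t • v) - gradient f x‖ ≤ L * (t * ‖v‖) := by
          have := hlip (x + t • v) x
          simpa [norm_smul, abs_of_nonneg ht.1] using this
        nlinarith [norm_nonneg v, mul_le_mul_of_nonneg_right h4 (norm_nonneg v)]
    calc _ ≤ _ := h1
      _ = (inner ℝ (gradient f x) v : ℝ) + L / 2 * ‖v‖ ^ 2 := by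
        have hrw : (fun t : ℝ => (inner ℝ (gradient f x) v : ℝ) + L * t * ‖v‖ ^ 2)
            = fun t : ℝ => (inner ℝ (gradient f x) v : ℝ) + (L * ‖v‖ ^ 2) * t := by
          funext t; ring
        rw [hrw, intervalIntegral.integral_add intervalIntegrable_const
          (IntervalIntegrable.const_mul intervalIntegral.intervalIntegrable_id _),
          intervalIntegral.integral_const_mul, integral_id]
        simp
        ring
  linarith [heq, hbound]

/-- Expected one-step descent inequality (before invoking the alignment
coefficient) for a masked stochastic gradient step on an `L`-smooth function. -/
theorem expected_masked_descent (n : ℕ) (f : EuclideanSpace ℝ (Fin n) → ℝ)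
    (L : ℝ) (hL : 0 ≤ L) (hdiff : Differentiable ℝ f)
    (hlip : ∀ x y, ‖gradient f x - gradient f y‖ ≤ L * ‖x - y‖)
    (S : Finset (Fin n)) (Ω : Type*) [MeasurableSpace Ω]
    (μ : Measure Ω) [IsProbabilityMeasure μ]
    (g : Ω → EuclideanSpace ℝ (Fin n))
    (x : EuclideanSpace ℝ (Fin n)) (γ σ : ℝ)
    (hg₁ : Integrable (fun ω => mask S (g ω)) μ)
    (hg₂ : Integrable (fun ω => ‖mask S (g ω)‖ ^ 2) μ)
    (hg₃ : Integrable (fun ω => f (x - γ • mask S (g ω))) μ)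
    (d : EuclideanSpace ℝ (Fin n)) (hd : d = ∫ ω, mask S (g ω) ∂μ)
    (hvar : ∫ ω, ‖mask S (g ω) - d‖ ^ 2 ∂μ ≤ σ ^ 2) :
    ∫ ω, f (x - γ • mask S (g ω)) ∂μ ≤
      f x - γ * (inner ℝ (mask S (gradient f x)) d : ℝ) +
        (γ ^ 2 * L / 2) * (‖d‖ ^ 2 + σ ^ 2) := by
  set u : Ω → EuclideanSpace ℝ (Fin n) := fun ω => mask S (g ω) with hu
  set g0 := gradient f x with hg0
  -- pointwise descent
  have hpt : ∀ ω, f (x - γ • u ω) ≤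
      f x - γ * (inner ℝ g0 (u ω) : ℝ) + (γ ^ 2 * L / 2) * ‖u ω‖ ^ 2 := by
    intro ω
    have := descent_lemma f L hL hdiff hlip x (-(γ • u ω))
    have h1 : (inner ℝ g0 (-(γ • u ω)) : ℝ) = -(γ * inner ℝ g0 (u ω)) := by
      rw [inner_neg_right, real_inner_smul_right]
    have h2 : ‖-(γ • u ω)‖ ^ 2 = γ ^ 2 * ‖u ω‖ ^ 2 := by
      rw [norm_neg, norm_smul]
      simp [mul_pow, sq_abs]
    rw [h1, h2] at this
    calc f (x - γ • u ω) = f (x + -(γ • u ω)) := by rw [sub_eq_add_neg]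
      _ ≤ _ := this
      _ = f x - γ * (inner ℝ g0 (u ω) : ℝ) + (γ ^ 2 * L / 2) * ‖u ω‖ ^ 2 := by ring
  -- integrability of the RHS
  have hinner_int : Integrable (fun ω => (inner ℝ g0 (u ω) : ℝ)) μ := hg₁.const_inner g0
  have hA : Integrable (fun ω => f x - γ * (inner ℝ g0 (u ω) : ℝ)) μ :=
    (integrable_const (f x)).sub (hinner_int.const_mul γ)
  have hrhs_int : Integrable
      (fun ω => f x - γ * (inner ℝ g0 (u ω) : ℝ) + (γ ^ 2 * L / 2) * ‖u ω‖ ^ 2) μ :=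
    hA.add (hg₂.const_mul _)
  have hmono := integral_mono hg₃ hrhs_int hpt
  -- compute integral of RHS
  have hinner_eq : ∫ ω, (inner ℝ g0 (u ω) : ℝ) ∂μ = (inner ℝ g0 d : ℝ) := by
    rw [hd]; exact integral_inner hg₁ g0
  have hIrhs : ∫ ω, (f x - γ * (inner ℝ g0 (u ω) : ℝ) + (γ ^ 2 * L / 2) * ‖u ω‖ ^ 2) ∂μ
      = f x - γ * (inner ℝ g0 d : ℝ) + (γ ^ 2 * L / 2) * ∫ ω, ‖u ω‖ ^ 2 ∂μ := by
    rw [integral_add hA (hg₂.const_mul _),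
      integral_sub (integrable_const (f x)) (hinner_int.const_mul γ),
      integral_const_mul, integral_const_mul, hinner_eq]
    simp
    exact Or.inl rfl
  -- variance decomposition
  have hvar2 : ∫ ω, ‖u ω‖ ^ 2 ∂μ ≤ ‖d‖ ^ 2 + σ ^ 2 := by
    have hexp : ∀ ω, ‖u ω - d‖ ^ 2
        = ‖u ω‖ ^ 2 - 2 * (inner ℝ (u ω) d : ℝ) + ‖d‖ ^ 2 := fun ω => by
      rw [norm_sub_sq_real]
    have hid_int : Integrable (fun ω => (inner ℝ (u ω) d : ℝ)) μ :=
      hg₁.inner_const d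
    have hud_eq : ∫ ω, (inner ℝ (u ω) d : ℝ) ∂μ = ‖d‖ ^ 2 := by
      have h5 : ∫ ω, (inner ℝ (u ω) d : ℝ) ∂μ = (inner ℝ d d : ℝ) := by
        have h6 : ∫ ω, (inner ℝ d (u ω) : ℝ) ∂μ = (inner ℝ d (∫ ω, u ω ∂μ) : ℝ) :=
          integral_inner hg₁ d
        rw [← hd] at h6
        have h7 : (fun ω => (inner ℝ d (u ω) : ℝ)) = fun ω => (inner ℝ (u ω) d : ℝ) :=
          funext fun ω => real_inner_comm _ _
        rw [h7, real_inner_comm] at h6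
        exact h6
      rw [h5, real_inner_self_eq_norm_sq]
    have : ∫ ω, ‖u ω - d‖ ^ 2 ∂μ = ∫ ω, ‖u ω‖ ^ 2 ∂μ - ‖d‖ ^ 2 := by
      calc ∫ ω, ‖u ω - d‖ ^ 2 ∂μ
          = ∫ ω, (‖u ω‖ ^ 2 - 2 * (inner ℝ (u ω) d : ℝ) + ‖d‖ ^ 2) ∂μ := by
            exact integral_congr_ae (Filter.Eventually.of_forall hexp)
        _ = ∫ ω, ‖u ω‖ ^ 2 ∂μ - 2 * ∫ ω, (inner ℝ (u ω) d : ℝ) ∂μ + ‖d‖ ^ 2 := by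
            have hB : Integrable (fun ω => ‖u ω‖ ^ 2 - 2 * (inner ℝ (u ω) d : ℝ)) μ :=
              hg₂.sub (hid_int.const_mul 2)
            rw [integral_add hB (integrable_const _),
              integral_sub hg₂ (hid_int.const_mul 2), integral_const_mul]
            simp
            rfl
        _ = ∫ ω, ‖u ω‖ ^ 2 ∂μ - ‖d‖ ^ 2 := by rw [hud_eq]; ring
    linarith [hvar, this]
  -- masking the gradient in the inner product
  have hdmask : ∀ i : Fin n, i ∉ S → d i = 0 := by
    intro i hi
    have : (EuclideanSpace.proj i : EuclideanSpace ℝ (Fin n) →L[ℝ] ℝ) d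
        = ∫ ω, (EuclideanSpace.proj i : EuclideanSpace ℝ (Fin n) →L[ℝ] ℝ) (u ω) ∂μ := by
      rw [hd]
      exact (ContinuousLinearMap.integral_comp_comm _ hg₁).symm
    have h0 : ∀ ω, (EuclideanSpace.proj i : EuclideanSpace ℝ (Fin n) →L[ℝ] ℝ) (u ω) = 0 := by
      intro ω
      show (mask S (g ω)) i = 0
      simp [mask, hi]
    simp only [h0] at this
    have hdi : (EuclideanSpace.proj i : EuclideanSpace ℝ (Fin n) →L[ℝ] ℝ) d = d i := rfl
    rw [hdi] at this
    simpa using this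
  have hmaskinner : (inner ℝ g0 d : ℝ) = (inner ℝ (mask S g0) d : ℝ) := by
    simp only [PiLp.inner_apply, RCLike.inner_apply, starRingEnd_apply, star_trivial]
    apply Finset.sum_congr rfl
    intro i _
    by_cases hi : i ∈ S
    · simp [mask, hi]
    · simp [mask, hi, hdmask i hi]
  have hfinal : (γ ^ 2 * L / 2) * ∫ ω, ‖u ω‖ ^ 2 ∂μ
      ≤ (γ ^ 2 * L / 2) * (‖d‖ ^ 2 + σ ^ 2) := by
    apply mul_le_mul_of_nonneg_left hvar2
    positivity
  rw [hIrhs, hmaskinner] at hmono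
  linarith [hmono, hfinal, hmaskinner.le, hmaskinner.ge]
end

section
/- Let n : ℕ, let f : EuclideanSpace ℝ (Fin n) → ℝ be differentiable with L-Lipschitz gradient (L ≥ 0), let S be a finite set of coordinates, and let (Ω, μ) be a probability space. Let g : Ω → EuclideanSpace ℝ (Fin n) with ω ↦ (g ω)∣S integrable, ω ↦ ‖(g ω)∣S‖^2 integrable, and ω ↦ f (x - γₜ • (g ω)∣S) integrable, where γₜ := α * γ. Let d := ∫ (g ω)∣S ∂μ and assume: (i) ∫ ‖(g ω)∣S - d‖^2 ∂μ ≤ σ^2; (ii) the alignment condition ⟪(gradient f x)∣S, d⟫ ≥ α * ‖d‖^2 with 0 < α ≤ 1; (iii) 0 < γ and γ * L ≤ 1. Then ∫ f (x - (α * γ) • (g ω)∣S) ∂μ ≤ f x - (γ / 2) * α^2 * ‖d‖^2 + (γ^2 * L / 2) * σ^2. -/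
open MeasureTheory

lemma descent {n : ℕ} (f : EuclideanSpace ℝ (Fin n) → ℝ) (L : ℝ)
    (hdiff : Differentiable ℝ f)
    (hlip : ∀ x y, ‖gradient f x - gradient f y‖ ≤ L * ‖x - y‖)
    (x v : EuclideanSpace ℝ (Fin n)) :
    f (x + v) ≤ f x + (inner ℝ (gradient f x) v : ℝ) + L / 2 * ‖v‖ ^ 2 := by
  set ψ : ℝ → ℝ := fun t =>
    f (x + t • v) - t * (inner ℝ (gradient f x) v : ℝ) - L * t ^ 2 / 2 * ‖v‖ ^ 2 with hψ
  have hderiv : ∀ t : ℝ, HasDerivAt ψ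
      ((inner ℝ (gradient f (x + t • v)) v : ℝ) - (inner ℝ (gradient f x) v : ℝ)
        - L * t * ‖v‖ ^ 2) t := by
    intro t
    have h1 : HasDerivAt (fun t : ℝ => x + t • v) v t := by
      simpa using ((hasDerivAt_id t).smul_const v).const_add x
    have h2 : HasDerivAt (fun t : ℝ => f (x + t • v))
        ((inner ℝ (gradient f (x + t • v)) v : ℝ)) t := by
      have := ((hdiff (x + t • v)).hasGradientAt.hasFDerivAt).comp_hasDerivAt t h1
      rw [InnerProductSpace.toDual_apply_apply] at this
      exact this
    have h3 : HasDerivAt (fun t : ℝ => L * t ^ 2 / 2 * ‖v‖ ^ 2)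
        (L * t * ‖v‖ ^ 2) t := by
      have := (((hasDerivAt_pow 2 t).const_mul L).div_const 2).mul_const (‖v‖ ^ 2)
      exact this.congr_deriv (by ring)
    exact ((h2.sub ((hasDerivAt_id t).mul_const _)).sub h3).congr_deriv (by ring)
  have hmono : AntitoneOn ψ (Set.Icc (0:ℝ) 1) := by
    apply antitoneOn_of_deriv_nonpos (convex_Icc 0 1)
    · exact fun t _ => ((hderiv t).continuousAt).continuousWithinAt
    · exact fun t _ => (hderiv t).differentiableAt.differentiableWithinAt
    · intro t ht
      rw [(hderiv t).deriv]
      rw [interior_Icc] at ht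
      have ht0 : 0 ≤ t := le_of_lt ht.1
      have h4 : (inner ℝ (gradient f (x + t • v)) v : ℝ) - (inner ℝ (gradient f x) v : ℝ)
          ≤ L * t * ‖v‖ ^ 2 := by
        have := real_inner_le_norm (gradient f (x + t • v) - gradient f x) v
        rw [inner_sub_left] at this
        have h5 := hlip (x + t • v) x
        simp only [add_sub_cancel_left] at h5
        have h6 : ‖t • v‖ = t * ‖v‖ := by
          rw [norm_smul, Real.norm_eq_abs, abs_of_nonneg ht0]
        calc (inner ℝ (gradient f (x + t • v)) v : ℝ) - inner ℝ (gradient f x) v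
            ≤ ‖gradient f (x + t • v) - gradient f x‖ * ‖v‖ := this
          _ ≤ L * ‖t • v‖ * ‖v‖ := by
              apply mul_le_mul_of_nonneg_right h5 (norm_nonneg _)
          _ = L * t * ‖v‖ ^ 2 := by rw [h6]; ring
      linarith
  have := hmono (Set.left_mem_Icc.2 zero_le_one) (Set.right_mem_Icc.2 zero_le_one) zero_le_one
  simp only [hψ, zero_smul, add_zero, one_smul, zero_mul, mul_zero, sub_zero, one_pow,
    mul_one] at this
  linarith

lemma inner_mask_right {n : ℕ} (S : Finset (Fin n)) (w u : EuclideanSpace ℝ (Fin n)) :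
    (inner ℝ w (mask S u) : ℝ) = inner ℝ (mask S w) (mask S u) := by
  simp only [PiLp.inner_apply, RCLike.inner_apply, conj_trivial, mask]
  refine Finset.sum_congr rfl fun i _ => ?_
  by_cases h : i ∈ S <;> simp [h]

set_option maxHeartbeats 800000 in
/-- Lemma 1 (one-step lemma) of ProgFed: under the alignment condition with
coefficient `α ∈ (0,1]` and the step size `γₜ = α * γ` with `γ * L ≤ 1`, one
masked stochastic gradient step on the `L`-smooth full objective decreases the
expected loss by `(γ/2) α² ‖d‖²` up to the noise term `(γ² L / 2) σ²`. -/
theorem progfed_one_step (n : ℕ) (f : EuclideanSpace ℝ (Fin n) → ℝ)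
    (L : ℝ) (hL : 0 ≤ L) (hdiff : Differentiable ℝ f)
    (hlip : ∀ x y, ‖gradient f x - gradient f y‖ ≤ L * ‖x - y‖)
    (S : Finset (Fin n)) (Ω : Type*) [MeasurableSpace Ω]
    (μ : Measure Ω) [IsProbabilityMeasure μ]
    (g : Ω → EuclideanSpace ℝ (Fin n))
    (x : EuclideanSpace ℝ (Fin n)) (α γ σ : ℝ)
    (hg₁ : Integrable (fun ω => mask S (g ω)) μ)
    (hg₂ : Integrable (fun ω => ‖mask S (g ω)‖ ^ 2) μ)
    (hg₃ : Integrable (fun ω => f (x - (α * γ) • mask S (g ω))) μ)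
    (d : EuclideanSpace ℝ (Fin n)) (hd : d = ∫ ω, mask S (g ω) ∂μ)
    (hvar : ∫ ω, ‖mask S (g ω) - d‖ ^ 2 ∂μ ≤ σ ^ 2)
    (halign : (inner ℝ (mask S (gradient f x)) d : ℝ) ≥ α * ‖d‖ ^ 2)
    (hα₀ : 0 < α) (hα₁ : α ≤ 1) (hγ : 0 < γ) (hγL : γ * L ≤ 1) :
    ∫ ω, f (x - (α * γ) • mask S (g ω)) ∂μ ≤
      f x - (γ / 2) * α ^ 2 * ‖d‖ ^ 2 + (γ ^ 2 * L / 2) * σ ^ 2 := by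
  set m : Ω → EuclideanSpace ℝ (Fin n) := fun ω => mask S (g ω) with hm
  set w : EuclideanSpace ℝ (Fin n) := mask S (gradient f x) with hw
  set γₜ : ℝ := α * γ with hγₜ
  have hγₜ0 : 0 < γₜ := mul_pos hα₀ hγ
  have hc0 : (0:ℝ) ≤ L * γₜ ^ 2 / 2 := by positivity
  -- pointwise descent bound (in additive form)
  have hpt : ∀ ω, f (x - γₜ • m ω) ≤
      f x + ((-γₜ) * (inner ℝ w (m ω) : ℝ) + (L * γₜ ^ 2 / 2) * ‖m ω‖ ^ 2) := by
    intro ω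
    have := descent f L hdiff hlip x (-(γₜ • m ω))
    have hin : (inner ℝ (gradient f x) (-(γₜ • m ω)) : ℝ) = -(γₜ * inner ℝ w (m ω)) := by
      rw [inner_neg_right, inner_smul_right, inner_mask_right S (gradient f x) (g ω)]
    have hnrm : ‖-(γₜ • m ω)‖ ^ 2 = γₜ ^ 2 * ‖m ω‖ ^ 2 := by
      rw [norm_neg, norm_smul, mul_pow, Real.norm_eq_abs, sq_abs]
    rw [hin, hnrm] at this
    have hx : x + -(γₜ • m ω) = x - γₜ • m ω := by abel
    rw [hx] at this
    linarith
  -- integrability of the RHS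
  have hint_inner : Integrable (fun ω => (inner ℝ w (m ω) : ℝ)) μ :=
    (innerSL ℝ w).integrable_comp hg₁
  have hrhs2 : Integrable
      (fun ω => (-γₜ) * (inner ℝ w (m ω) : ℝ) + (L * γₜ ^ 2 / 2) * ‖m ω‖ ^ 2) μ :=
    (hint_inner.const_mul _).add (hg₂.const_mul _)
  have hrhs : Integrable
      (fun ω => f x + ((-γₜ) * (inner ℝ w (m ω) : ℝ) + (L * γₜ ^ 2 / 2) * ‖m ω‖ ^ 2)) μ :=
    (integrable_const (f x)).add hrhs2
  have hstep : ∫ ω, f (x - γₜ • m ω) ∂μ ≤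
      ∫ ω, (f x + ((-γₜ) * (inner ℝ w (m ω) : ℝ) + (L * γₜ ^ 2 / 2) * ‖m ω‖ ^ 2)) ∂μ :=
    integral_mono hg₃ hrhs hpt
  -- compute integrals
  have hIinner : ∫ ω, (inner ℝ w (m ω) : ℝ) ∂μ = inner ℝ w d := by
    rw [hd]; exact integral_inner hg₁ w
  have hRHS : ∫ ω, (f x + ((-γₜ) * (inner ℝ w (m ω) : ℝ) + (L * γₜ ^ 2 / 2) * ‖m ω‖ ^ 2)) ∂μ
      = f x + ((-γₜ) * (inner ℝ w d : ℝ) + (L * γₜ ^ 2 / 2) * ∫ ω, ‖m ω‖ ^ 2 ∂μ) := by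
    rw [integral_add (integrable_const (f x)) hrhs2,
      integral_add (hint_inner.const_mul _) (hg₂.const_mul _),
      integral_const, integral_const_mul, integral_const_mul, hIinner]
    simp [hm]
  -- variance decomposition: ∫‖m‖² ≤ σ² + ‖d‖²
  have hvar' : ∫ ω, ‖m ω‖ ^ 2 ∂μ ≤ σ ^ 2 + ‖d‖ ^ 2 := by
    have hexp : ∀ ω, ‖m ω - d‖ ^ 2 =
        ‖m ω‖ ^ 2 + ((-2) * (inner ℝ d (m ω) : ℝ) + ‖d‖ ^ 2) := by
      intro ω
      rw [norm_sub_sq_real, real_inner_comm]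
      ring
    have hint_d : Integrable (fun ω => (inner ℝ d (m ω) : ℝ)) μ :=
      (innerSL ℝ d).integrable_comp hg₁
    have hinner_d : ∫ ω, (inner ℝ d (m ω) : ℝ) ∂μ = ‖d‖ ^ 2 := by
      rw [hd, integral_inner hg₁, real_inner_self_eq_norm_sq]
    have h1 : ∫ ω, ‖m ω - d‖ ^ 2 ∂μ = (∫ ω, ‖m ω‖ ^ 2 ∂μ) + ((-2) * ‖d‖ ^ 2 + ‖d‖ ^ 2) := by
      calc ∫ ω, ‖m ω - d‖ ^ 2 ∂μ
          = ∫ ω, (‖m ω‖ ^ 2 + ((-2) * (inner ℝ d (m ω) : ℝ) + ‖d‖ ^ 2)) ∂μ :=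
            integral_congr_ae (Filter.Eventually.of_forall hexp)
        _ = (∫ ω, ‖m ω‖ ^ 2 ∂μ) + ((-2) * ‖d‖ ^ 2 + ‖d‖ ^ 2) := by
            have h2' : Integrable (fun ω => (-2) * (inner ℝ d (m ω) : ℝ) + ‖d‖ ^ 2) μ :=
              (hint_d.const_mul _).add (integrable_const _)
            rw [integral_add hg₂ h2',
              integral_add (hint_d.const_mul _) (integrable_const _),
              integral_const, integral_const_mul, hinner_d]
            simp [hm]
    linarith [hvar]
  -- combine
  have halign' : γₜ * (inner ℝ w d : ℝ) ≥ γₜ * (α * ‖d‖ ^ 2) :=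
    mul_le_mul_of_nonneg_left halign hγₜ0.le
  have hN : (L * γₜ ^ 2 / 2) * ∫ ω, ‖m ω‖ ^ 2 ∂μ ≤ (L * γₜ ^ 2 / 2) * (σ ^ 2 + ‖d‖ ^ 2) :=
    mul_le_mul_of_nonneg_left hvar' hc0
  have hσ2 : (0:ℝ) ≤ σ ^ 2 := sq_nonneg _
  have hd2 : (0:ℝ) ≤ ‖d‖ ^ 2 := sq_nonneg _
  have hα2 : α ^ 2 ≤ 1 := by nlinarith
  have key1 : L * γₜ ^ 2 / 2 * σ ^ 2 ≤ (γ ^ 2 * L / 2) * σ ^ 2 := by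
    have h7 : L * γₜ ^ 2 / 2 ≤ γ ^ 2 * L / 2 := by
      rw [hγₜ]
      nlinarith [mul_le_mul_of_nonneg_left hα2 (mul_nonneg hL (sq_nonneg γ))]
    exact mul_le_mul_of_nonneg_right h7 hσ2
  have key2 : -(γₜ * (α * ‖d‖ ^ 2)) + L * γₜ ^ 2 / 2 * ‖d‖ ^ 2 ≤
      -(γ / 2) * α ^ 2 * ‖d‖ ^ 2 := by
    have h8 : L * (α * γ) ^ 2 / 2 ≤ α ^ 2 * γ / 2 := by
      nlinarith [mul_le_mul_of_nonneg_left hγL (show (0:ℝ) ≤ α ^ 2 * γ by positivity)]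
    rw [hγₜ]
    nlinarith [mul_le_mul_of_nonneg_right h8 hd2]
  have hfinal : f x + ((-γₜ) * (inner ℝ w d : ℝ) + (L * γₜ ^ 2 / 2) * ∫ ω, ‖m ω‖ ^ 2 ∂μ) ≤
      f x - (γ / 2) * α ^ 2 * ‖d‖ ^ 2 + (γ ^ 2 * L / 2) * σ ^ 2 := by
    linarith [hN, halign', key1, key2, mul_add (L * γₜ ^ 2 / 2) (σ ^ 2) (‖d‖ ^ 2)]
  calc ∫ ω, f (x - γₜ • m ω) ∂μ
      ≤ f x + ((-γₜ) * (inner ℝ w d : ℝ) + (L * γₜ ^ 2 / 2) * ∫ ω, ‖m ω‖ ^ 2 ∂μ) := by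
        rw [← hRHS]; exact hstep
    _ ≤ _ := hfinal
end

section
/- Let T : ℕ with T ≥ 1, let L > 0, σ > 0, F₀ > 0, and set γ := min (1 / L) (Real.sqrt (F₀ / (L * σ^2 * T))). Let F G : ℕ → ℝ with F 0 = F₀, F t ≥ 0 for all t ≤ T, and F (t+1) ≤ F t - (γ / 2) * G t + (γ^2 * L / 2) * σ^2 for every t < T. Then (1 / T) * ∑_{t=0}^{T-1} G t ≤ 2 * F₀ * L / T + 3 * Real.sqrt (F₀ * L * σ^2 / T). -/
/-- First part of Theorem 1 of ProgFed with the explicit step-size choice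
`γ = min{1/L, √(F₀/(L σ² T))}`: the `1/T`-average of the weighted squared
masked subnetwork gradient norms converges at rate
`O(F₀ L / T + σ √(F₀ L / T))`. -/
theorem progfed_rate (T : ℕ) (hT : 1 ≤ T) (L σ F₀ : ℝ)
    (hL : 0 < L) (hσ : 0 < σ) (hF₀ : 0 < F₀)
    (γ : ℝ) (hγ : γ = min (1 / L) (Real.sqrt (F₀ / (L * σ ^ 2 * T))))
    (F G : ℕ → ℝ) (hF0 : F 0 = F₀) (hF : ∀ t ≤ T, 0 ≤ F t)
    (hstep : ∀ t < T, F (t + 1) ≤ F t - (γ / 2) * G t + (γ ^ 2 * L / 2) * σ ^ 2) :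
    (1 / (T : ℝ)) * ∑ t ∈ Finset.range T, G t ≤
      2 * F₀ * L / T + 3 * Real.sqrt (F₀ * L * σ ^ 2 / T) := by
  have hT' : (0:ℝ) < T := by exact_mod_cast hT
  set s := Real.sqrt (F₀ / (L * σ ^ 2 * T)) with hs
  have hs0 : 0 < s := Real.sqrt_pos.2 (by positivity)
  have hs2 : s ^ 2 = F₀ / (L * σ ^ 2 * T) := Real.sq_sqrt (by positivity)
  have hγ0 : 0 < γ := by rw [hγ]; exact lt_min (by positivity) hs0
  have hγ2 : γ ≤ s := by rw [hγ]; exact min_le_right _ _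
  set R := Real.sqrt (F₀ * L * σ ^ 2 / T) with hR
  have hR0 : 0 ≤ R := Real.sqrt_nonneg _
  have hR2 : R ^ 2 = F₀ * L * σ ^ 2 / T := Real.sq_sqrt (by positivity)
  -- key sqrt identities
  have hC1 : s * L * σ ^ 2 = R := by
    have h : (s * L * σ ^ 2) ^ 2 = R ^ 2 := by
      rw [hR2, mul_pow, mul_pow, hs2]; field_simp
    calc s * L * σ ^ 2 = Real.sqrt ((s * L * σ ^ 2) ^ 2) :=
          (Real.sqrt_sq (by positivity)).symm
      _ = R := by rw [h, hR2, hR]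
  have hC2 : F₀ / (s * T) = R := by
    have h : (F₀ / (s * T)) ^ 2 = R ^ 2 := by
      rw [hR2, div_pow, mul_pow]
      rw [hs2]
      field_simp
    calc F₀ / (s * T) = Real.sqrt ((F₀ / (s * T)) ^ 2) :=
          (Real.sqrt_sq (by positivity)).symm
      _ = R := by rw [h, hR2, hR]
  -- telescoping
  have hsum : (γ / 2) * ∑ t ∈ Finset.range T, G t
      ≤ F₀ + (T : ℝ) * ((γ ^ 2 * L / 2) * σ ^ 2) := by
    have h1 : ∀ t ∈ Finset.range T,
        (γ / 2) * G t ≤ (F t - F (t + 1)) + (γ ^ 2 * L / 2) * σ ^ 2 := by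
      intro t ht
      have := hstep t (Finset.mem_range.1 ht)
      linarith
    have hFT := hF T le_rfl
    calc (γ / 2) * ∑ t ∈ Finset.range T, G t
        = ∑ t ∈ Finset.range T, (γ / 2) * G t := Finset.mul_sum _ _ _
      _ ≤ ∑ t ∈ Finset.range T, ((F t - F (t + 1)) + (γ ^ 2 * L / 2) * σ ^ 2) :=
          Finset.sum_le_sum h1
      _ = (F 0 - F T) + (T : ℝ) * ((γ ^ 2 * L / 2) * σ ^ 2) := by
          rw [Finset.sum_add_distrib, Finset.sum_range_sub' F, Finset.sum_const,
            Finset.card_range, nsmul_eq_mul]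
      _ ≤ F₀ + (T : ℝ) * ((γ ^ 2 * L / 2) * σ ^ 2) := by rw [hF0]; linarith
  have hS : ∑ t ∈ Finset.range T, G t ≤ 2 * F₀ / γ + (T : ℝ) * γ * L * σ ^ 2 := by
    have h2 : (γ / 2) * (2 * F₀ / γ + (T : ℝ) * γ * L * σ ^ 2)
        = F₀ + (T : ℝ) * ((γ ^ 2 * L / 2) * σ ^ 2) := by
      field_simp
    have hc : (0:ℝ) < γ / 2 := by positivity
    rw [← h2] at hsum
    exact (mul_le_mul_iff_right₀ hc).1 hsum
  have havg : (1 / (T : ℝ)) * ∑ t ∈ Finset.range T, G t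
      ≤ 2 * F₀ / (γ * T) + γ * L * σ ^ 2 := by
    have h3 : (1 / (T : ℝ)) * (2 * F₀ / γ + (T : ℝ) * γ * L * σ ^ 2)
        = 2 * F₀ / (γ * T) + γ * L * σ ^ 2 := by
      field_simp
    calc (1 / (T : ℝ)) * ∑ t ∈ Finset.range T, G t
        ≤ (1 / (T : ℝ)) * (2 * F₀ / γ + (T : ℝ) * γ * L * σ ^ 2) := by
          apply mul_le_mul_of_nonneg_left hS (by positivity)
      _ = _ := h3
  have hA : γ * L * σ ^ 2 ≤ R := by
    rw [← hC1]
    have := mul_le_mul_of_nonneg_right hγ2 (le_of_lt hL)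
    nlinarith [sq_nonneg σ, hσ.le, mul_le_mul_of_nonneg_right this (sq_nonneg σ)]
  have hB : 2 * F₀ / (γ * T) ≤ 2 * F₀ * L / T + 2 * R := by
    rcases min_cases (1 / L) s with ⟨h1, _⟩ | ⟨h1, _⟩ <;> rw [hγ, h1]
    · have he : 2 * F₀ / ((1 / L) * T) = 2 * F₀ * L / T := by field_simp
      rw [he]
      linarith [hR0]
    · have he : 2 * F₀ / (s * T) = 2 * R := by
        rw [mul_div_assoc, hC2]
      rw [he]
      have : 0 ≤ 2 * F₀ * L / T := by positivity
      linarith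
  linarith
end

section
/- Let n : ℕ, let f : EuclideanSpace ℝ (Fin n) → ℝ be differentiable, let T : ℕ with T ≥ 1, let ε ≥ 0, let x : ℕ → EuclideanSpace ℝ (Fin n), d : ℕ → EuclideanSpace ℝ (Fin n), and α : ℕ → ℝ with α t * ‖d t‖ > 0 for every t < T, and let q := the maximum over t < T of ‖gradient f (x t)‖ / (α t * ‖d t‖). If (1 / T) * ∑_{t=0}^{T-1} (α t)^2 * ‖d t‖^2 ≤ ε / q^2, then (1 / T) * ∑_{t=0}^{T-1} ‖gradient f (x t)‖^2 ≤ ε. -/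
/-- Second part of Theorem 1 of ProgFed: using `ε/q²` as the accuracy
threshold for the weighted masked subnetwork gradients yields an
`ε`-approximate stationary point of the full model in the averaged sense. -/
theorem progfed_full_model_convergence (n : ℕ)
    (f : EuclideanSpace ℝ (Fin n) → ℝ) (hdiff : Differentiable ℝ f)
    (T : ℕ) (hT : 1 ≤ T) (ε : ℝ) (hε : 0 ≤ ε)
    (x d : ℕ → EuclideanSpace ℝ (Fin n)) (α : ℕ → ℝ)
    (hpos : ∀ t < T, 0 < α t * ‖d t‖)
    (q : ℝ)
    (hq : q = (Finset.range T).sup'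
      (Finset.nonempty_range_iff.mpr (by omega))
      (fun t => ‖gradient f (x t)‖ / (α t * ‖d t‖)))
    (hbound : (1 / (T : ℝ)) * ∑ t ∈ Finset.range T, (α t) ^ 2 * ‖d t‖ ^ 2 ≤
      ε / q ^ 2) :
    (1 / (T : ℝ)) * ∑ t ∈ Finset.range T, ‖gradient f (x t)‖ ^ 2 ≤ ε := by
  have hqnn : 0 ≤ q := by
    rw [hq]
    apply Finset.le_sup'_of_le _ (Finset.mem_range.mpr hT)
    exact div_nonneg (norm_nonneg _) (le_of_lt (hpos 0 hT))
  have hkey : ∀ t < T, ‖gradient f (x t)‖ ≤ q * (α t * ‖d t‖) := by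
    intro t ht
    have h := Finset.le_sup' (fun t => ‖gradient f (x t)‖ / (α t * ‖d t‖))
      (Finset.mem_range.mpr ht)
    rw [← hq] at h
    have hp := hpos t ht
    calc ‖gradient f (x t)‖
        = ‖gradient f (x t)‖ / (α t * ‖d t‖) * (α t * ‖d t‖) := by
          rw [div_mul_cancel₀ _ (ne_of_gt hp)]
      _ ≤ q * (α t * ‖d t‖) := by
          apply mul_le_mul_of_nonneg_right h (le_of_lt hp)
  rcases eq_or_lt_of_le hqnn with hq0 | hq0
  · have : ∀ t ∈ Finset.range T, ‖gradient f (x t)‖ ^ 2 = 0 := by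
      intro t ht
      have ht' := Finset.mem_range.mp ht
      have := hkey t ht'
      rw [← hq0, zero_mul] at this
      have : ‖gradient f (x t)‖ = 0 := le_antisymm this (norm_nonneg _)
      simp [this]
    rw [Finset.sum_congr rfl this]
    simpa using hε
  · have hsum : ∑ t ∈ Finset.range T, ‖gradient f (x t)‖ ^ 2 ≤
        q ^ 2 * ∑ t ∈ Finset.range T, (α t) ^ 2 * ‖d t‖ ^ 2 := by
      rw [Finset.mul_sum]
      apply Finset.sum_le_sum
      intro t ht
      have ht' := Finset.mem_range.mp ht
      have h1 := hkey t ht'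
      have h2 : ‖gradient f (x t)‖ ^ 2 ≤ (q * (α t * ‖d t‖)) ^ 2 :=
        pow_le_pow_left₀ (norm_nonneg _) h1 2
      calc ‖gradient f (x t)‖ ^ 2 ≤ (q * (α t * ‖d t‖)) ^ 2 := h2
        _ = q ^ 2 * (α t ^ 2 * ‖d t‖ ^ 2) := by ring
    have hT0 : (0:ℝ) < T := by exact_mod_cast hT
    calc (1 / (T : ℝ)) * ∑ t ∈ Finset.range T, ‖gradient f (x t)‖ ^ 2
        ≤ (1 / (T : ℝ)) * (q ^ 2 * ∑ t ∈ Finset.range T, (α t) ^ 2 * ‖d t‖ ^ 2) := by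
          apply mul_le_mul_of_nonneg_left hsum (by positivity)
      _ = q ^ 2 * ((1 / (T : ℝ)) * ∑ t ∈ Finset.range T, (α t) ^ 2 * ‖d t‖ ^ 2) := by
          ring
      _ ≤ q ^ 2 * (ε / q ^ 2) := by
          apply mul_le_mul_of_nonneg_left hbound (by positivity)
      _ = ε := by field_simp
end
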